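/- Let s ≥ 1 and let t, z₁,…,z_s be elements of a field (or indeterminates over ℚ). For 1 ≤ k ≤ s define the polynomial P_k(z) = (1−z)^{s−k} · (z^k − ((1+t²)z − 1)^k)/(1 − t²z), where the division is exact (i.e., (1 − t²z) divides z^k − ((1+t²)z − 1)^k in ℚ[t][z]). Then det_{1≤j,k≤s} [P_k(z_j)] = (∏_{j=1}^{s} (1 + t² + ⋯ + t^{2(j−1)})) · ∏_{1≤j<k≤s} (z_k − z_j). -/
import Mathlib


open Finset Polynomial

private theorem aux_swap3 {n : ℕ} {F : Type*} [CommRing F] (g : Fin n → Fin n → F) :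
    ∏ j, ∏ k ∈ Iio j, g j k = ∏ j, ∏ k ∈ Ioi j, g k j := by
  rw [Finset.prod_sigma' univ (fun j => Iio j) (fun j k => g j k),
      Finset.prod_sigma' univ (fun j => Ioi j) (fun j k => g k j)]
  exact Finset.prod_nbij' (fun p => ⟨p.2, p.1⟩) (fun p => ⟨p.2, p.1⟩)
    (by simp [Finset.mem_sigma]) (by simp [Finset.mem_sigma]) (by simp) (by simp) (by simp)

private theorem aux_detB3 {s : ℕ} {F : Type*} [CommRing F] (z : Fin s → F) :
    Matrix.det (Matrix.of fun j m : Fin s => (1 - z j) ^ (s - 1 - (m : ℕ))) =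
      ∏ j : Fin s, ∏ k ∈ Ioi j, (z k - z j) := by
  have h2 := Matrix.det_submatrix_equiv_self (Fin.revPerm (n := s))
    (Matrix.of fun j m : Fin s => (1 - z j) ^ (s - 1 - (m : ℕ)))
  have h3 : ((Matrix.of fun j m : Fin s => (1 - z j) ^ (s - 1 - (m : ℕ))).submatrix
      Fin.revPerm Fin.revPerm) = Matrix.vandermonde (fun j => 1 - z (Fin.rev j)) := by
    ext j m
    simp only [Matrix.submatrix_apply, Matrix.of_apply, Matrix.vandermonde_apply, Fin.val_rev,
      Equiv.coe_fn_mk, Fin.revPerm_apply]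
    congr 1
    omega
  rw [← h2, h3, Matrix.det_vandermonde]
  have step1 : ∀ j : Fin s, ∏ k ∈ Ioi j, ((1 - z (Fin.rev k)) - (1 - z (Fin.rev j)))
      = ∏ k ∈ Iio (Fin.rev j), (z (Fin.rev j) - z k) := by
    intro j
    refine Finset.prod_nbij' (fun k => Fin.rev k) (fun k => Fin.rev k) ?_ ?_ (by simp) (by simp)
      (fun k _ => by ring)
    · intro k hk; simp only [mem_Ioi] at hk; simpa using Fin.rev_lt_rev.mpr hk
    · intro k hk; simp only [mem_Iio] at hk
      simp only [mem_Ioi]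
      rw [← Fin.rev_rev j]
      exact Fin.rev_lt_rev.mpr hk
  simp_rw [step1]
  rw [show (∏ x : Fin s, ∏ k ∈ Iio x.rev, (z x.rev - z k)) =
      ∏ j : Fin s, ∏ k ∈ Iio j, (z j - z k) from
    Equiv.prod_comp Fin.revPerm (fun j => ∏ k ∈ Iio j, (z j - z k))]
  exact aux_swap3 (fun j k => z j - z k)

private theorem auxP_natDegree3 {F : Type*} [Field F] (t : F) (k : ℕ) :
    (∑ i ∈ range (k+1), (X:F[X])^i * (C (1+t^2) * X - 1)^(k-i)).natDegree ≤ k := by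
  refine Polynomial.natDegree_sum_le_of_forall_le _ _ fun i hi => ?_
  simp only [mem_range] at hi
  refine (Polynomial.natDegree_mul_le).trans ?_
  have h2 : ((C (1+t^2) * X - 1 : F[X])).natDegree ≤ 1 := by
    refine (Polynomial.natDegree_sub_le _ _).trans ?_
    simp only [Polynomial.natDegree_one, max_le_iff]
    exact ⟨(Polynomial.natDegree_C_mul_le _ _).trans (by simp), by omega⟩
  have h3 : ((C (1+t^2) * X - 1 : F[X])^(k-i)).natDegree ≤ (k-i) := by
    refine (Polynomial.natDegree_pow_le).trans ?_
    calc (k-i) * ((C (1+t^2) * X - 1 : F[X])).natDegree ≤ (k-i) * 1 :=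
      Nat.mul_le_mul_left _ h2
    _ = k - i := by omega
  have h1 : ((X:F[X])^i).natDegree = i := Polynomial.natDegree_X_pow i
  omega

private theorem auxP_eval3 {F : Type*} [Field F] (t x : F) (k : ℕ) :
    Polynomial.eval x (∑ i ∈ range (k+1), (X:F[X])^i * (C (1+t^2) * X - 1)^(k-i)) =
      ∑ i ∈ range (k+1), x^i * ((1+t^2) * x - 1)^(k-i) := by
  simp [Polynomial.eval_finset_sum]

/-- Determinant evaluation: with `P_k(z) = (1-z)^{s-k}(z^k - ((1+t²)z-1)^k)/(1-t²z)`,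
`det[P_k(z_j)] = ∏_{j=1}^s (1 + t² + ⋯ + t^(2(j-1))) · ∏_{j<k}(z_k - z_j)`. -/
theorem stmt3 (s : ℕ) (hs : 1 ≤ s) (F : Type*) [Field F] (t : F) (z : Fin s → F)
    (h : ∀ j, 1 - t ^ 2 * z j ≠ 0) :
    Matrix.det (Matrix.of fun j k : Fin s =>
        (1 - z j) ^ (s - (k.val + 1)) *
          ((z j ^ (k.val + 1) - ((1 + t ^ 2) * z j - 1) ^ (k.val + 1)) / (1 - t ^ 2 * z j))) =
      (∏ j : Fin s, ∑ i ∈ range (j.val + 1), t ^ (2 * i)) *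
        ∏ j : Fin s, ∏ k ∈ Ioi j, (z k - z j) := by
  set P : ℕ → F[X] := fun k => ∑ i ∈ range (k+1), (X:F[X])^i * (C (1+t^2) * X - 1)^(k-i)
    with hPdef
  set Cmat : Matrix (Fin s) (Fin s) F := Matrix.of fun m k : Fin s =>
    if (m:ℕ) ≤ (k:ℕ) then
      (-1:F)^((k:ℕ)-(m:ℕ)) * (Polynomial.taylor 1 (P (k:ℕ))).coeff ((k:ℕ)-(m:ℕ))
    else 0 with hCdef
  set B : Matrix (Fin s) (Fin s) F :=
    Matrix.of fun j m : Fin s => (1 - z j) ^ (s - 1 - (m:ℕ)) with hBdef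
  have hdiv : ∀ (j : Fin s) (k : ℕ),
      (z j ^ (k+1) - ((1+t^2) * z j - 1)^(k+1)) / (1 - t^2 * z j)
        = Polynomial.eval (z j) (P k) := by
    intro j k
    rw [div_eq_iff (h j), hPdef, auxP_eval3]
    have hg := geom_sum₂_mul (z j) ((1+t^2) * z j - 1) (k+1)
    have hxy : z j - ((1+t^2) * z j - 1) = 1 - t^2 * z j := by ring
    rw [hxy] at hg
    simpa only [Nat.add_sub_cancel] using hg.symm
  have hM : (Matrix.of fun j k : Fin s =>
      (1 - z j) ^ (s - (k.val + 1)) *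
        ((z j ^ (k.val + 1) - ((1 + t ^ 2) * z j - 1) ^ (k.val + 1)) / (1 - t ^ 2 * z j)))
      = B * Cmat := by
    ext j k
    rw [Matrix.mul_apply]
    simp only [Matrix.of_apply]
    rw [hdiv j (k:ℕ)]
    have hk : (k:ℕ) < s := k.isLt
    have hdeg : (P (k:ℕ)).natDegree < (k:ℕ) + 1 :=
      Nat.lt_succ_of_le (auxP_natDegree3 t (k:ℕ))
    have heval : Polynomial.eval (z j) (P (k:ℕ)) = ∑ i ∈ range ((k:ℕ)+1),
        (Polynomial.taylor 1 (P (k:ℕ))).coeff i * (z j - 1)^i := by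
      rw [← Polynomial.taylor_eval_sub (1:F) (P (k:ℕ)) (z j),
        Polynomial.eval_eq_sum_range' (by rw [Polynomial.natDegree_taylor]; exact hdeg)]
    set c : ℕ → F := fun i => (Polynomial.taylor 1 (P (k:ℕ))).coeff i with hcdef
    set f : ℕ → F := fun m => (1 - z j)^(s-1-m) *
      (if m ≤ (k:ℕ) then (-1:F)^((k:ℕ)-m) * c ((k:ℕ)-m) else 0) with hfdef
    have step1 : (1 - z j) ^ (s - ((k:ℕ) + 1)) * Polynomial.eval (z j) (P (k:ℕ))
        = ∑ i ∈ range ((k:ℕ)+1), f ((k:ℕ) - i) := by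
      rw [heval, Finset.mul_sum]
      refine Finset.sum_congr rfl fun i hi => ?_
      simp only [mem_range] at hi
      have hcond : (k:ℕ) - i ≤ (k:ℕ) := by omega
      have hsub : (k:ℕ) - ((k:ℕ) - i) = i := by omega
      rw [hfdef]
      simp only [hcond, if_true, hsub]
      have hexp : s - 1 - ((k:ℕ) - i) = (s - ((k:ℕ)+1)) + i := by omega
      rw [hexp, pow_add]
      have : (z j - 1)^i = (-1:F)^i * (1 - z j)^i := by
        rw [← mul_pow]; congr 1; ring
      rw [this]; ring
    have step2 : ∑ i ∈ range ((k:ℕ)+1), f ((k:ℕ) - i) = ∑ i ∈ range ((k:ℕ)+1), f i := by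
      have := Finset.sum_range_reflect f ((k:ℕ)+1)
      simpa only [Nat.add_sub_cancel] using this
    have step3 : ∑ i ∈ range ((k:ℕ)+1), f i = ∑ m ∈ range s, f m := by
      refine Finset.sum_subset (Finset.range_subset_range.mpr (by omega)) fun m _ hm => ?_
      simp only [mem_range, not_lt] at hm
      rw [hfdef]
      simp only [if_neg (by omega : ¬ m ≤ (k:ℕ)), mul_zero]
    rw [step1, step2, step3, ← Fin.sum_univ_eq_sum_range f s]
    rfl
  have hdetC : Cmat.det = ∏ j : Fin s, ∑ i ∈ range (j.val+1), t^(2*i) := by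
    rw [Matrix.det_of_upperTriangular (M := Cmat) ?_]
    · refine Finset.prod_congr rfl fun k _ => ?_
      have : Cmat k k = (Polynomial.taylor 1 (P (k:ℕ))).coeff 0 := by
        simp [hCdef]
      rw [this, Polynomial.taylor_coeff_zero, hPdef, auxP_eval3]
      have hterm : ∀ i, (1:F)^i * ((1+t^2) * 1 - 1)^((k:ℕ)-i) = (fun m => t^(2*m)) ((k:ℕ)-i) := by
        intro i
        rw [one_pow, one_mul, show ((1:F)+t^2) * 1 - 1 = t^2 by ring, ← pow_mul]
      rw [Finset.sum_congr rfl (fun i _ => hterm i)]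
      have := Finset.sum_range_reflect (fun m => t^(2*m)) ((k:ℕ)+1)
      simpa only [Nat.add_sub_cancel] using this
    · intro m k hlt
      have : ¬ ((m:ℕ) ≤ (k:ℕ)) := by
        simp only [id] at hlt
        exact not_le.mpr hlt
      show Cmat m k = 0
      simp only [hCdef, Matrix.of_apply, if_neg this]
  rw [hM, Matrix.det_mul, hBdef, aux_detB3 z, hdetC, mul_comm]
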